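/- With the notation of the construction over 3 = {0,1,2} (T, ↩, E, and e(α) := lim_n (α↾n)^↩ as defined), the set e^{-1}({10^ω}) = { α ∈ T ∩ 3^ω : e(α) = 1000⋯ } is homeomorphic to the Baire space ℕ^ℕ; consequently e^{-1}({10^ω}) is not a countable union of compact subsets of 3^ω. -/

import Mathlib

open Set Classical

/-- The prefix of length `l` of an infinite word. -/
def wordPrefix {α : Type*} (x : ℕ → α) (l : ℕ) : List α := List.ofFn fun i : Fin l => x i.val

/-- `T ∩ 3^{<ω}`: finite words over `3 = {0,1,2}` all of whose prefixes contain at most as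
many `2`s as `1`s. -/
def Tfin : Set (List (Fin 3)) :=
  { s | ∀ l : ℕ, (s.take l).count 2 ≤ (s.take l).count 1 }

/-- `T ∩ 3^ω`: infinite words over `3 = {0,1,2}` all of whose finite prefixes contain at
most as many `2`s as `1`s. -/
def Tinf : Set (ℕ → Fin 3) :=
  { α | ∀ l : ℕ, (wordPrefix α l).count 2 ≤ (wordPrefix α l).count 1 }

/-- Replace the first occurrence of `1` (i.e. `true`) in a binary word by `0`. -/
def replaceFirstOne : List Bool → List Bool
  | [] => []
  | true :: t => false :: t
  | false :: t => false :: replaceFirstOne t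

/-- Replace the last occurrence of `1` (i.e. `true`) in a binary word by `0`. -/
def replaceLastOne (l : List Bool) : List Bool := (replaceFirstOne l.reverse).reverse

/-- One step of the erasing operation: appending a letter `ε ∈ {0,1}` appends it to the
erased word, while appending the letter `2` replaces the last `1` of the erased word by `0`. -/
def eraseStep (acc : List Bool) (a : Fin 3) : List Bool :=
  if a = 2 then replaceLastOne acc else acc ++ [decide (a = 1)]

/-- The erasing operation `s ↦ s^↩` on finite words over `3 = {0,1,2}` (letters `0`,`1` of
the binary output are encoded as `false`,`true`): `∅^↩ = ∅`, `(tε)^↩ = t^↩ε` for `ε ∈ {0,1}`,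
and `(t2)^↩ = t^↩` with its last `1` replaced by `0`. -/
def eraseWord (s : List (Fin 3)) : List Bool := s.foldl eraseStep []

/-- `t` is a (finite) prefix of the infinite word `x`. -/
def InfPrefix {α : Type*} (t : List α) (x : ℕ → α) : Prop :=
  ∀ i : Fin t.length, t.get i = x i.val

/-- The infinite word `x` is the limit of the sequence of finite words `s`: a finite word
is a prefix of `x` iff it is a prefix of `s m` for all sufficiently large `m`. -/
def IsLimitOf (x : ℕ → Bool) (s : ℕ → List Bool) : Prop :=
  ∀ t : List Bool, InfPrefix t x ↔ ∀ᶠ m in Filter.atTop, t <+: s m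

/-- The erasure `e(α) := lim_n (α↾n)^↩` of an infinite word over `3 = {0,1,2}` (an arbitrary
value is returned if the limit does not exist; for `α ∈ T ∩ 3^ω` it always exists). -/
noncomputable def eMap (α : ℕ → Fin 3) : ℕ → Bool :=
  if h : ∃ x : ℕ → Bool, IsLimitOf x (fun m => eraseWord (wordPrefix α m)) then h.choose
  else fun _ => false

/-- The infinite binary word `10^ω = 1000⋯`. -/
noncomputable def oneZeros : ℕ → Bool := fun n => decide (n = 0)

/-- The set `e^{-1}({10^ω}) = { α ∈ T ∩ 3^ω : e(α) = 1000⋯ }`. -/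
noncomputable def preimTenZeros : Set (ℕ → Fin 3) :=
  { α | α ∈ Tinf ∧ eMap α = oneZeros }

lemma rfo_length (l : List Bool) : (replaceFirstOne l).length = l.length := by
  induction l with
  | nil => rfl
  | cons a t ih => cases a <;> simp [replaceFirstOne, ih]

lemma rlo_length (l : List Bool) : (replaceLastOne l).length = l.length := by
  simp [replaceLastOne, rfo_length]

lemma rfo_of_not_mem (l : List Bool) (h : true ∉ l) : replaceFirstOne l = l := by
  induction l with
  | nil => rfl
  | cons a t ih =>
    cases a
    · simp only [List.mem_cons] at h
      simp [replaceFirstOne, ih (fun hm => h (Or.inr hm))]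
    · exact absurd List.mem_cons_self h

lemma rfo_append (l m : List Bool) (h : true ∈ l) :
    replaceFirstOne (l ++ m) = replaceFirstOne l ++ m := by
  induction l with
  | nil => simp at h
  | cons a t ih =>
    cases a
    · simp only [List.mem_cons] at h
      have ht : true ∈ t := by
        rcases h with h | h
        · exact absurd h.symm (by simp)
        · exact h
      simp [replaceFirstOne, ih ht]
    · simp [replaceFirstOne]

lemma rlo_append (l m : List Bool) (h : true ∈ m) :
    replaceLastOne (l ++ m) = l ++ replaceLastOne m := by
  unfold replaceLastOne
  rw [List.reverse_append, rfo_append _ _ (by simpa using h), List.reverse_append,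
    List.reverse_reverse]

lemma rfo_count (l : List Bool) (h : true ∈ l) :
    (replaceFirstOne l).count true + 1 = l.count true := by
  induction l with
  | nil => simp at h
  | cons a t ih =>
    cases a
    · simp only [List.mem_cons] at h
      have ht : true ∈ t := by
        rcases h with h | h
        · exact absurd h.symm (by simp)
        · exact h
      simp only [replaceFirstOne, List.count_cons]
      simp [ih ht]
    · simp [replaceFirstOne, List.count_cons]

lemma rlo_count (l : List Bool) (h : true ∈ l) :
    (replaceLastOne l).count true + 1 = l.count true := by
  unfold replaceLastOne
  rw [List.count_reverse]
  rw [← List.count_reverse (l := l)]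
  exact rfo_count _ (by simpa using h)

lemma rfo_getD_mono (l : List Bool) (i : ℕ) (h : (replaceFirstOne l).getD i false = true) :
    l.getD i false = true := by
  induction l generalizing i with
  | nil => simpa [replaceFirstOne] using h
  | cons a t ih =>
    cases a
    · cases i with
      | zero => simpa [replaceFirstOne] using h
      | succ j => simp only [replaceFirstOne, List.getD_cons_succ] at h ⊢; exact ih j h
    · cases i with
      | zero => simpa [replaceFirstOne] using h
      | succ j => simpa [replaceFirstOne, List.getD_cons_succ] using h

lemma rlo_getD_mono (l : List Bool) (i : ℕ) (h : (replaceLastOne l).getD i false = true) :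
    l.getD i false = true := by
  by_cases hi : i < l.length
  · have hi' : i < (replaceLastOne l).length := by rwa [rlo_length]
    have hrev : l.reverse.getD (l.length - 1 - i) false = true := by
      have := rfo_getD_mono l.reverse (l.length - 1 - i) ?_
      · exact this
      · have hlen : l.length - 1 - i < (replaceFirstOne l.reverse).length := by
          rw [rfo_length, List.length_reverse]; omega
        rw [List.getD_eq_getElem _ _ hlen]
        have : (replaceLastOne l)[i]'hi' = (replaceFirstOne l.reverse)[l.length - 1 - i]'hlen := by
          simp only [replaceLastOne]
          rw [List.getElem_reverse]
          congr 1
          rw [rfo_length, List.length_reverse]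
        rw [List.getD_eq_getElem _ _ hi'] at h
        rw [← this]; exact h
    rw [List.getD_eq_getElem _ _ hi]
    have h2 : l.length - 1 - i < l.reverse.length := by simp; omega
    rw [List.getD_eq_getElem _ _ h2, List.getElem_reverse] at hrev
    convert hrev using 2
    omega
  · rw [List.getD_eq_default _ _ (by rw [rlo_length]; omega)] at h
    simp at h





lemma fin3_cases (a : Fin 3) : a = 0 ∨ a = 1 ∨ a = 2 := by revert a; decide

lemma count_true_zero_getD (l : List Bool) (h : l.count true = 0) (i : ℕ) :
    l.getD i false = false := by
  have : true ∉ l := by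
    intro hm
    have := List.count_pos_iff.2 hm
    omega
  by_cases hi : i < l.length
  · rw [List.getD_eq_getElem _ _ hi]
    have : l[i] ∈ l := List.getElem_mem _
    cases hv : l[i]
    · rfl
    · rw [hv] at this; exact absurd this ‹true ∉ l›
  · rw [List.getD_eq_default _ _ (by omega)]

lemma getD_take (l : List Bool) (k i : ℕ) (h : i < k) :
    (l.take k).getD i false = l.getD i false := by
  by_cases hi : i < l.length
  · rw [List.getD_eq_getElem _ _ (by simp; omega), List.getD_eq_getElem _ _ hi,
      List.getElem_take]
  · rw [List.getD_eq_default _ _ (by simp; omega), List.getD_eq_default _ _ (by omega)]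

lemma foldl_split : ∀ (u : List (Fin 3)) (m acc : List Bool),
    (∀ l, (u.take l).count 2 ≤ (u.take l).count 1 + acc.count true) →
    List.foldl eraseStep (m ++ acc) u = m ++ List.foldl eraseStep acc u := by
  intro u
  induction u with
  | nil => intro m acc _; rfl
  | cons a u' ih =>
    intro m acc hyp
    rcases fin3_cases a with ha | ha | ha
    · subst ha
      simp only [List.foldl_cons, eraseStep, if_neg (by decide : (0:Fin 3) ≠ 2)]
      rw [List.append_assoc]
      exact ih m (acc ++ [decide ((0:Fin 3) = 1)]) (by
        intro l
        have := hyp (l + 1)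
        simp only [List.take_succ_cons, List.count_cons] at this
        simp only [List.count_append]
        simp +decide at this ⊢
        omega)
    · subst ha
      simp only [List.foldl_cons, eraseStep, if_neg (by decide : (1:Fin 3) ≠ 2)]
      rw [List.append_assoc]
      exact ih m (acc ++ [decide ((1:Fin 3) = 1)]) (by
        intro l
        have := hyp (l + 1)
        simp only [List.take_succ_cons, List.count_cons] at this
        simp only [List.count_append]
        simp +decide at this ⊢
        omega)
    · subst ha
      have h1 := hyp 1
      simp +decide [List.take_succ_cons, List.count_cons] at h1
      have hmem : true ∈ acc := h1
      simp only [List.foldl_cons, eraseStep, if_pos rfl]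
      rw [rlo_append _ _ hmem]
      exact ih m (replaceLastOne acc) (by
        intro l
        have := hyp (l + 1)
        have hc := rlo_count acc hmem
        simp only [List.take_succ_cons, List.count_cons] at this
        simp +decide at this ⊢
        omega)

lemma foldl_count : ∀ (u : List (Fin 3)) (acc : List Bool),
    (∀ l, (u.take l).count 2 ≤ (u.take l).count 1 + acc.count true) →
    (List.foldl eraseStep acc u).count true + u.count 2 = acc.count true + u.count 1 := by
  intro u
  induction u with
  | nil => intro acc _; simp
  | cons a u' ih =>
    intro acc hyp
    rcases fin3_cases a with ha | ha | ha
    · subst ha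
      simp only [List.foldl_cons, eraseStep, if_neg (by decide : (0:Fin 3) ≠ 2)]
      have := ih (acc ++ [decide ((0:Fin 3) = 1)]) (by
        intro l
        have := hyp (l + 1)
        simp only [List.take_succ_cons, List.count_cons] at this
        simp only [List.count_append]
        simp +decide at this ⊢
        omega)
      simp only [List.count_append, List.count_cons] at this ⊢
      simp +decide at this ⊢
      omega
    · subst ha
      simp only [List.foldl_cons, eraseStep, if_neg (by decide : (1:Fin 3) ≠ 2)]
      have := ih (acc ++ [decide ((1:Fin 3) = 1)]) (by
        intro l
        have := hyp (l + 1)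
        simp only [List.take_succ_cons, List.count_cons] at this
        simp only [List.count_append]
        simp +decide at this ⊢
        omega)
      simp only [List.count_append, List.count_cons] at this ⊢
      simp +decide at this ⊢
      omega
    · subst ha
      have h1 := hyp 1
      simp +decide [List.take_succ_cons, List.count_cons] at h1
      have hmem : true ∈ acc := h1
      have hc := rlo_count acc hmem
      simp only [List.foldl_cons, eraseStep, if_pos rfl]
      have := ih (replaceLastOne acc) (by
        intro l
        have := hyp (l + 1)
        simp only [List.take_succ_cons, List.count_cons] at this
        simp +decide at this ⊢
        omega)
      simp only [List.count_cons] at this ⊢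
      simp +decide at this ⊢
      omega

lemma foldl_len : ∀ (u : List (Fin 3)) (acc : List Bool),
    (List.foldl eraseStep acc u).length + u.count 2 = acc.length + u.length := by
  intro u
  induction u with
  | nil => intro acc; simp
  | cons a u' ih =>
    intro acc
    rcases fin3_cases a with ha | ha | ha <;> subst ha
    · simp only [List.foldl_cons, eraseStep, if_neg (by decide : (0:Fin 3) ≠ 2)]
      have := ih (acc ++ [decide ((0:Fin 3) = 1)])
      simp only [List.count_cons, List.length_append, List.length_cons] at this ⊢
      simp +decide at this ⊢
      omega
    · simp only [List.foldl_cons, eraseStep, if_neg (by decide : (1:Fin 3) ≠ 2)]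
      have := ih (acc ++ [decide ((1:Fin 3) = 1)])
      simp only [List.count_cons, List.length_append, List.length_cons] at this ⊢
      simp +decide at this ⊢
      omega
    · simp only [List.foldl_cons, eraseStep, if_pos rfl]
      have := ih (replaceLastOne acc)
      have := rlo_length acc
      simp only [List.count_cons, List.length_cons] at *
      simp +decide at *
      omega

lemma foldl_getD_mono : ∀ (u : List (Fin 3)) (acc : List Bool) (i : ℕ), i < acc.length →
    (List.foldl eraseStep acc u).getD i false = true → acc.getD i false = true := by
  intro u
  induction u with
  | nil => intro acc i _ h; exact h
  | cons a u' ih =>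
    intro acc i hi h
    simp only [List.foldl_cons] at h
    by_cases ha : a = 2
    · subst ha
      simp only [eraseStep, if_pos rfl] at h
      exact rlo_getD_mono _ _ (ih _ _ (by rwa [rlo_length]) h)
    · simp only [eraseStep, if_neg ha] at h
      have := ih _ _ (by simp; omega) h
      rwa [List.getD_append _ _ _ _ hi] at this

lemma foldl_stab : ∀ (u : List (Fin 3)) (acc : List Bool) (i : ℕ), i < acc.length →
    acc.getD i false = true →
    (∀ l, (acc.take (i+1)).count true + (u.take l).count 2
        ≤ (u.take l).count 1 + acc.count true) →
    (List.foldl eraseStep acc u).getD i false = true := by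
  intro u
  induction u with
  | nil => intro acc i _ h _; exact h
  | cons a u' ih =>
    intro acc i hi hti hyp
    simp only [List.foldl_cons]
    by_cases ha : a = 2
    · subst ha
      simp only [eraseStep, if_pos rfl]
      have h1 := hyp 1
      simp +decide [List.take_succ_cons, List.count_cons] at h1
      -- count over take/drop split
      have hsplit : acc.count true
          = (acc.take (i+1)).count true + (acc.drop (i+1)).count true := by
        conv_lhs => rw [← List.take_append_drop (i+1) acc]
        rw [List.count_append]
      have hdrop : 0 < (acc.drop (i+1)).count true := by omega
      have hmemdrop : true ∈ acc.drop (i+1) := List.count_pos_iff.1 hdrop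
      have hmem : true ∈ acc := by
        have := List.count_pos_iff.2 hmemdrop
        exact List.count_pos_iff.1 (by omega)
      have hrlo : replaceLastOne acc = acc.take (i+1) ++ replaceLastOne (acc.drop (i+1)) := by
        conv_lhs => rw [← List.take_append_drop (i+1) acc]
        exact rlo_append _ _ hmemdrop
      have hlen_take : (acc.take (i+1)).length = i + 1 := by simp; omega
      have hgd : (replaceLastOne acc).getD i false = true := by
        rw [hrlo, List.getD_append _ _ _ _ (by omega), getD_take _ _ _ (by omega)]
        exact hti
      have htake_eq : (replaceLastOne acc).take (i+1) = acc.take (i+1) := by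
        rw [hrlo, List.take_append_of_le_length (by omega), List.take_take]
        simp
      apply ih _ _ (by rw [rlo_length]; omega) hgd
      intro l
      have := hyp (l+1)
      have hc := rlo_count acc hmem
      simp only [List.take_succ_cons, List.count_cons] at this
      rw [htake_eq]
      simp +decide at this ⊢
      omega
    · simp only [eraseStep, if_neg ha]
      have hgd : (acc ++ [decide (a = 1)]).getD i false = true := by
        rw [List.getD_append _ _ _ _ hi]; exact hti
      apply ih _ _ (by simp; omega) hgd
      intro l
      have := hyp (l+1)
      have htake_eq : (acc ++ [decide (a = 1)]).take (i+1) = acc.take (i+1) :=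
        List.take_append_of_le_length (by omega)
      rw [htake_eq, List.count_append]
      simp only [List.take_succ_cons, List.count_cons] at this
      rcases fin3_cases a with h0 | h0 | h0 <;> subst h0
      · simp +decide at this ⊢; omega
      · simp +decide at this ⊢; omega
      · exact absurd rfl ha

lemma exists_pos_of_count : ∀ (l : List Bool) (c : ℕ), 0 < c → c ≤ l.count true →
    ∃ j, j < l.length ∧ l.getD j false = true ∧ (l.take (j+1)).count true = c := by
  intro l
  induction l with
  | nil => intro c hc h; simp at h; omega
  | cons a t ih =>
    intro c hc h
    cases a
    · simp only [List.count_cons] at h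
      simp +decide at h
      obtain ⟨j, hj1, hj2, hj3⟩ := ih c hc h
      exact ⟨j+1, by simp; omega, by simpa using hj2, by
        simp only [List.take_succ_cons, List.count_cons]
        simp +decide
        exact hj3⟩
    · by_cases hc1 : c = 1
      · subst hc1
        exact ⟨0, by simp, by simp, by simp [List.count_cons]⟩
      · simp only [List.count_cons] at h
        simp +decide at h
        obtain ⟨j, hj1, hj2, hj3⟩ := ih (c-1) (by omega) (by omega)
        exact ⟨j+1, by simp; omega, by simpa using hj2, by
          simp only [List.take_succ_cons, List.count_cons]
          simp +decide
          omega⟩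









lemma wp_length {β : Type*} (x : ℕ → β) (n : ℕ) : (wordPrefix x n).length = n := by
  simp [wordPrefix]

lemma wp_getElem {β : Type*} (x : ℕ → β) (n i : ℕ) (h : i < (wordPrefix x n).length) :
    (wordPrefix x n)[i] = x i := by
  simp [wordPrefix]

lemma wp_getD {β : Type*} [Inhabited β] (x : ℕ → β) (n i : ℕ) (h : i < n) (d : β) :
    (wordPrefix x n).getD i d = x i := by
  rw [List.getD_eq_getElem _ _ (by rw [wp_length]; omega), wp_getElem]

lemma wp_succ {β : Type*} (x : ℕ → β) (n : ℕ) :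
    wordPrefix x (n + 1) = wordPrefix x n ++ [x n] := by
  unfold wordPrefix
  rw [List.ofFn_succ']
  simp [List.concat_eq_append]

lemma wp_take {β : Type*} (x : ℕ → β) (n m : ℕ) :
    (wordPrefix x n).take m = wordPrefix x (min m n) := by
  apply List.ext_getElem (by simp [wp_length])
  intro i h1 h2
  rw [List.getElem_take, wp_getElem, wp_getElem]

lemma wp_prefix {β : Type*} (x : ℕ → β) {n m : ℕ} (h : m ≤ n) :
    wordPrefix x m <+: wordPrefix x n := by
  have : wordPrefix x m = (wordPrefix x n).take m := by
    rw [wp_take, min_eq_left h]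
  rw [this]
  exact List.take_prefix _ _

lemma infPrefix_wp {β : Type*} (x : ℕ → β) (n : ℕ) : InfPrefix (wordPrefix x n) x := by
  intro i
  rw [List.get_eq_getElem, wp_getElem]

lemma infPrefix_iff {β : Type*} (t : List β) (x : ℕ → β) :
    InfPrefix t x ↔ t = wordPrefix x t.length := by
  constructor
  · intro h
    apply List.ext_getElem (by simp [wp_length])
    intro i h1 h2
    rw [wp_getElem]
    exact h ⟨i, h1⟩
  · intro h
    rw [h]
    exact infPrefix_wp x t.length

lemma isLimitOf_unique {x y : ℕ → Bool} {s : ℕ → List Bool}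
    (hx : IsLimitOf x s) (hy : IsLimitOf y s) : x = y := by
  funext n
  have h1 : InfPrefix (wordPrefix x (n+1)) x := infPrefix_wp x (n+1)
  have h2 : InfPrefix (wordPrefix x (n+1)) y := (hy _).2 ((hx _).1 h1)
  have := h2 ⟨n, by rw [wp_length]; omega⟩
  rw [List.get_eq_getElem, wp_getElem] at this
  simpa using this

lemma eMap_eq_of_isLimit {α : ℕ → Fin 3} {x : ℕ → Bool}
    (h : IsLimitOf x (fun m => eraseWord (wordPrefix α m))) : eMap α = x := by
  unfold eMap
  have hex : ∃ y : ℕ → Bool, IsLimitOf y (fun m => eraseWord (wordPrefix α m)) := ⟨x, h⟩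
  rw [dif_pos hex]
  exact isLimitOf_unique hex.choose_spec h

lemma isLimit_of_eMap_eq {α : ℕ → Fin 3} (h : eMap α = oneZeros) :
    IsLimitOf oneZeros (fun m => eraseWord (wordPrefix α m)) := by
  unfold eMap at h
  split at h
  · next hex =>
    rw [← h]
    exact Exists.choose_spec hex
  · next hex =>
    have := congrFun h 0
    simp [oneZeros] at this

lemma eraseWord_append (s u : List (Fin 3))
    (h : ∀ l, (u.take l).count 2 ≤ (u.take l).count 1) :
    eraseWord (s ++ u) = eraseWord s ++ eraseWord u := by
  unfold eraseWord
  rw [List.foldl_append]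
  have := foldl_split u (s.foldl eraseStep []) [] (by simpa using h)
  simpa using this

lemma eraseWord_count (s : List (Fin 3))
    (h : ∀ l, (s.take l).count 2 ≤ (s.take l).count 1) :
    (eraseWord s).count true + s.count 2 = s.count 1 := by
  have := foldl_count s [] (by simpa using h)
  simpa [eraseWord] using this

lemma eraseWord_length (s : List (Fin 3)) :
    (eraseWord s).length + s.count 2 = s.length := by
  have := foldl_len s []
  simpa [eraseWord] using this

def IsBlock (s : List (Fin 3)) : Prop :=
  s ≠ [] ∧ s.count 1 = s.count 2 ∧
    ∀ l, 0 < l → l < s.length → (s.take l).count 2 < (s.take l).count 1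

lemma isBlock_zero : IsBlock [0] :=
  ⟨by simp, by decide, by intro l h1 h2; simp at h2; omega⟩

lemma isBlock_tfin {s : List (Fin 3)} (h : IsBlock s) :
    ∀ l, (s.take l).count 2 ≤ (s.take l).count 1 := by
  intro l
  rcases Nat.eq_zero_or_pos l with h0 | h0
  · subst h0; simp
  rcases Nat.lt_or_ge l s.length with hl | hl
  · exact le_of_lt (h.2.2 l h0 hl)
  · rw [List.take_of_length_le hl]
    have := h.2.1
    omega

lemma len_counts (s : List (Fin 3)) : s.count 0 + s.count 1 + s.count 2 = s.length := by
  induction s with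
  | nil => simp
  | cons a t ih =>
    rcases fin3_cases a with h | h | h <;> subst h <;>
      simp +decide [List.count_cons] <;> omega

lemma isBlock_len_pos {s : List (Fin 3)} (h : IsBlock s) :
    s.count 2 + 1 ≤ s.length := by
  have hc := len_counts s
  have h1 := h.2.1
  have : s.length ≠ 0 := by
    intro h0
    exact h.1 (List.length_eq_zero_iff.1 h0)
  omega

abbrev Blk := {s : List (Fin 3) // IsBlock s}

def pc (γ : ℕ → Blk) : ℕ → List (Fin 3)
  | 0 => [1]
  | n + 1 => pc γ n ++ (γ n).val

def Ffun (γ : ℕ → Blk) : ℕ → Fin 3 := fun m => (pc γ (m + 1)).getD m 0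

lemma pc_length_ge (γ : ℕ → Blk) (n : ℕ) : n + 1 ≤ (pc γ n).length := by
  induction n with
  | zero => simp [pc]
  | succ n ih =>
    have : 1 ≤ (γ n).val.length := List.length_pos_iff.2 (γ n).2.1
    simp only [pc, List.length_append]
    omega

lemma pc_prefix (γ : ℕ → Blk) {m n : ℕ} (h : m ≤ n) : pc γ m <+: pc γ n := by
  induction n with
  | zero => rw [Nat.le_zero.1 h]
  | succ n ih =>
    rcases Nat.lt_or_ge m (n+1) with h1 | h1
    · exact (ih (by omega)).trans ⟨(γ n).val, rfl⟩
    · rw [show m = n + 1 by omega]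

lemma pc_getD (γ : ℕ → Blk) {m n : ℕ} (h : m < (pc γ n).length) :
    (pc γ n).getD m 0 = Ffun γ m := by
  unfold Ffun
  rcases Nat.le_total n (m+1) with hle | hle
  · obtain ⟨r, hr⟩ := pc_prefix γ hle
    rw [← hr, List.getD_append _ _ _ _ h]
  · obtain ⟨r, hr⟩ := pc_prefix γ hle
    rw [← hr, List.getD_append]
    have := pc_length_ge γ (m+1)
    omega

lemma wp_F (γ : ℕ → Blk) {l n : ℕ} (h : l ≤ (pc γ n).length) :
    wordPrefix (Ffun γ) l = (pc γ n).take l := by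
  apply List.ext_getElem (by simp [wp_length]; omega)
  intro i h1 h2
  rw [wp_getElem, List.getElem_take]
  rw [wp_length] at h1
  rw [← pc_getD γ (show i < (pc γ n).length by omega), List.getD_eq_getElem]

lemma wp_F_full (γ : ℕ → Blk) (n : ℕ) :
    wordPrefix (Ffun γ) (pc γ n).length = pc γ n := by
  rw [wp_F γ (le_refl _), List.take_of_length_le (le_refl _)]

lemma pc_count (γ : ℕ → Blk) (n : ℕ) :
    (pc γ n).count 1 = (pc γ n).count 2 + 1 := by
  induction n with
  | zero => simp +decide [pc]
  | succ n ih =>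
    simp only [pc, List.count_append]
    have := (γ n).2.2.1
    omega

lemma pc_take_count (γ : ℕ → Blk) (n : ℕ) :
    ∀ l, 0 < l → ((pc γ n).take l).count 2 < ((pc γ n).take l).count 1 := by
  induction n with
  | zero =>
    intro l hl
    have : (pc γ 0).take l = [1] := by
      cases l with
      | zero => omega
      | succ k => simp [pc]
    rw [this]; decide
  | succ n ih =>
    intro l hl
    rcases Nat.le_total l (pc γ n).length with h1 | h1
    · rw [show pc γ (n+1) = pc γ n ++ (γ n).val from rfl,
        List.take_append_of_le_length h1]
      exact ih l hl
    · rw [show pc γ (n+1) = pc γ n ++ (γ n).val from rfl,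
        List.take_append, List.take_of_length_le h1,
        List.count_append, List.count_append]
      have hfull := ih (pc γ n).length (by have := pc_length_ge γ n; omega)
      rw [List.take_of_length_le (le_refl _)] at hfull
      have hblk := isBlock_tfin (γ n).2 (l - (pc γ n).length)
      omega

lemma F_tfin (γ : ℕ → Blk) (l : ℕ) :
    (wordPrefix (Ffun γ) l).count 2 ≤ (wordPrefix (Ffun γ) l).count 1 := by
  rcases Nat.eq_zero_or_pos l with h0 | h0
  · subst h0; simp [wordPrefix]
  · have hl : l ≤ (pc γ l).length := by have := pc_length_ge γ l; omega
    rw [wp_F γ hl]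
    exact le_of_lt (pc_take_count γ l l h0)

lemma er_pc (γ : ℕ → Blk) (n : ℕ) :
    ∃ r : List Bool, eraseWord (pc γ n) = true :: r ∧ r.count true = 0 := by
  induction n with
  | zero => exact ⟨[], by simp +decide [pc, eraseWord, eraseStep], rfl⟩
  | succ n ih =>
    obtain ⟨r, hr, hc⟩ := ih
    have happ : eraseWord (pc γ (n+1)) = eraseWord (pc γ n) ++ eraseWord (γ n).val :=
      eraseWord_append _ _ (isBlock_tfin (γ n).2)
    have hcnt : (eraseWord (γ n).val).count true = 0 := by
      have := eraseWord_count (γ n).val (isBlock_tfin (γ n).2)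
      have := (γ n).2.2.1
      omega
    exact ⟨r ++ eraseWord (γ n).val, by rw [happ, hr]; rfl, by
      rw [List.count_append]; omega⟩

lemma er_pc_getD (γ : ℕ → Blk) (n i : ℕ) :
    (eraseWord (pc γ n)).getD i false = decide (i = 0) ∨
      (eraseWord (pc γ n)).getD i false = false := by
  obtain ⟨r, hr, hc⟩ := er_pc γ n
  rw [hr]
  cases i with
  | zero => left; simp
  | succ j =>
    right
    rw [List.getD_cons_succ]
    exact count_true_zero_getD r hc j

lemma er_pc_length (γ : ℕ → Blk) (n : ℕ) :
    n + 1 ≤ (eraseWord (pc γ n)).length := by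
  induction n with
  | zero => simp +decide [pc, eraseWord, eraseStep]
  | succ n ih =>
    have happ : eraseWord (pc γ (n+1)) = eraseWord (pc γ n) ++ eraseWord (γ n).val :=
      eraseWord_append _ _ (isBlock_tfin (γ n).2)
    have hlen := eraseWord_length (γ n).val
    have hpos := isBlock_len_pos (γ n).2
    rw [happ, List.length_append]
    omega
lemma er_pc_getElem (γ : ℕ → Blk) (n i : ℕ) (h : i < (eraseWord (pc γ n)).length) :
    (eraseWord (pc γ n))[i] = decide (i = 0) := by
  obtain ⟨r, hr, hc⟩ := er_pc γ n
  have : (eraseWord (pc γ n))[i] = (eraseWord (pc γ n)).getD i false :=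
    (List.getD_eq_getElem _ _ h).symm
  rw [this, hr]
  cases i with
  | zero => simp
  | succ j =>
    rw [List.getD_cons_succ, count_true_zero_getD r hc j]
    simp

lemma F_split (γ : ℕ → Blk) {n m : ℕ} (h : (pc γ n).length ≤ m) :
    ∃ u, wordPrefix (Ffun γ) m = pc γ n ++ u ∧
      (∀ l, (u.take l).count 2 ≤ (u.take l).count 1) := by
  have hnm : n ≤ m := le_trans (by have := pc_length_ge γ n; omega) h
  have hm : m ≤ (pc γ m).length := by have := pc_length_ge γ m; omega
  obtain ⟨r, hr⟩ := pc_prefix γ hnm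
  refine ⟨r.take (m - (pc γ n).length), ?_, ?_⟩
  · rw [wp_F γ hm, ← hr, List.take_append,
      List.take_of_length_le h]
  · intro l
    rw [List.take_take]
    set l' := min l (m - (pc γ n).length) with hl'
    have hle : (pc γ n).length + l' ≤ (pc γ m).length := by omega
    have htake : (pc γ m).take ((pc γ n).length + l') = pc γ n ++ r.take l' := by
      rw [← hr, List.take_append,
        List.take_of_length_le (by omega), Nat.add_sub_cancel_left]
    have hcnt := pc_take_count γ m ((pc γ n).length + l')
      (by have := pc_length_ge γ n; omega)
    rw [htake, List.count_append, List.count_append] at hcnt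
    have h1 := pc_count γ n
    omega

lemma F_isLimit (γ : ℕ → Blk) :
    IsLimitOf oneZeros (fun m => eraseWord (wordPrefix (Ffun γ) m)) := by
  intro t
  constructor
  · intro ht
    rw [Filter.eventually_atTop]
    refine ⟨(pc γ t.length).length, fun m hm => ?_⟩
    obtain ⟨u, hu, hcnt⟩ := F_split γ hm
    show t <+: eraseWord (wordPrefix (Ffun γ) m)
    rw [hu, eraseWord_append _ _ hcnt]
    refine List.IsPrefix.trans ?_ (List.prefix_append _ _)
    rw [List.prefix_iff_eq_take]
    apply List.ext_getElem
      (by rw [List.length_take]; have := er_pc_length γ t.length; omega)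
    intro i h1 h2
    rw [List.getElem_take, er_pc_getElem γ t.length i
      (by have := er_pc_length γ t.length; omega)]
    have hti := ht ⟨i, h1⟩
    rw [List.get_eq_getElem] at hti
    rw [hti]
    simp [oneZeros]
  · intro hev
    rw [infPrefix_iff]
    rw [Filter.eventually_atTop] at hev
    obtain ⟨N, hN⟩ := hev
    set n := N + t.length with hn
    have hm : N ≤ (pc γ n).length := le_trans (by omega) (pc_length_ge γ n)
    have hp := hN _ hm
    rw [show (fun m => eraseWord (wordPrefix (Ffun γ) m)) (pc γ n).length
        = eraseWord (wordPrefix (Ffun γ) (pc γ n).length) from rfl,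
      wp_F_full] at hp
    have hlen : t.length ≤ (eraseWord (pc γ n)).length := hp.length_le
    have hlen2 : t.length ≤ n + 1 + t.length := by omega
    apply List.ext_getElem (by simp [wp_length])
    intro i h1 h2
    rw [wp_getElem, hp.getElem h1, er_pc_getElem γ n i (by omega)]
    simp [oneZeros]
lemma F_mem_Tinf (γ : ℕ → Blk) : Ffun γ ∈ Tinf := fun l => F_tfin γ l

lemma F_mem (γ : ℕ → Blk) : Ffun γ ∈ preimTenZeros :=
  ⟨F_mem_Tinf γ, eMap_eq_of_isLimit (F_isLimit γ)⟩
def hgt (α : ℕ → Fin 3) (m : ℕ) : ℕ := (eraseWord (wordPrefix α m)).count true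

noncomputable def nextB (α : ℕ → Fin 3) (p : ℕ) : ℕ :=
  if h : ∃ m, p < m ∧ hgt α m = 1 then Nat.find h else p + 1

noncomputable def bnd (α : ℕ → Fin 3) : ℕ → ℕ
  | 0 => 1
  | n + 1 => nextB α (bnd α n)

noncomputable def blockOf (α : ℕ → Fin 3) (n : ℕ) : List (Fin 3) :=
  (wordPrefix α (bnd α (n+1))).drop (bnd α n)

noncomputable def gammaOf (α : ℕ → Fin 3) (n : ℕ) : Blk :=
  if h : IsBlock (blockOf α n) then ⟨_, h⟩ else ⟨[0], isBlock_zero⟩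

lemma wp_one (α : ℕ → Fin 3) : wordPrefix α 1 = [α 0] := by
  have := wp_succ α 0
  simpa [wordPrefix] using this

lemma eraseWord_split (α : ℕ → Fin 3) {k m : ℕ} (h : k ≤ m) :
    eraseWord (wordPrefix α m) =
      List.foldl eraseStep (eraseWord (wordPrefix α k)) ((wordPrefix α m).drop k) := by
  conv_lhs => rw [← List.take_append_drop k (wordPrefix α m)]
  unfold eraseWord
  rw [List.foldl_append, wp_take, min_eq_left h]

lemma wp_split_take (α : ℕ → Fin 3) {k m : ℕ} (h : k ≤ m) (l : ℕ) :
    wordPrefix α (min (k + l) m) =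
      wordPrefix α k ++ ((wordPrefix α m).drop k).take l := by
  have := List.take_add (l := wordPrefix α m) (i := k) (j := l)
  rw [wp_take, wp_take, min_eq_left h] at this
  exact this

section Decomp

variable {α : ℕ → Fin 3} (hT : α ∈ Tinf)
  (hL : IsLimitOf oneZeros (fun m => eraseWord (wordPrefix α m)))

include hT in
lemma hgt_rel (m : ℕ) :
    hgt α m + (wordPrefix α m).count 2 = (wordPrefix α m).count 1 := by
  apply eraseWord_count
  intro l
  rw [wp_take]
  exact hT (min l m)

include hL in
lemma erasure_true_event (j : ℕ) :
    ∀ N, ∃ m, N ≤ m ∧ j < (eraseWord (wordPrefix α m)).length ∧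
      (eraseWord (wordPrefix α m)).getD j false = oneZeros j := by
  intro N
  have h1 : InfPrefix (wordPrefix oneZeros (j+1)) oneZeros := infPrefix_wp _ _
  have h2 := (hL _).1 h1
  rw [Filter.eventually_atTop] at h2
  obtain ⟨M, hM⟩ := h2
  refine ⟨max N M, le_max_left _ _, ?_⟩
  have hp := hM (max N M) (le_max_right N M)
  have hlen : j + 1 ≤ (eraseWord (wordPrefix α (max N M))).length := by
    have := hp.length_le
    rwa [wp_length] at this
  have hj : j < (wordPrefix oneZeros (j+1)).length := by rw [wp_length]; omega
  have hg := List.IsPrefix.getElem hp hj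
  rw [wp_getElem] at hg
  refine ⟨by omega, ?_⟩
  rw [List.getD_eq_getElem _ _ (by omega)]
  exact hg.symm

include hT hL in
lemma alpha0 : α 0 = 1 := by
  rcases fin3_cases (α 0) with h | h | h
  · exfalso
    obtain ⟨m, hm, hlen, hval⟩ := erasure_true_event hL 0 1
    have hmono := foldl_getD_mono ((wordPrefix α m).drop 1)
      (eraseWord (wordPrefix α 1)) 0
    rw [← eraseWord_split α hm] at hmono
    have h01 : eraseWord (wordPrefix α 1) = [false] := by
      rw [wp_one, h]; decide
    rw [h01] at hmono
    have : [false].getD 0 false = true := by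
      apply hmono (by simp)
      rw [hval]
      simp [oneZeros]
    simp at this
  · exact h
  · exfalso
    have := hT 1
    rw [wp_one, h] at this
    simp +decide [List.count_cons] at this
  
include hT hL in
lemma hgt_one : hgt α 1 = 1 := by
  unfold hgt
  rw [wp_one, alpha0 hT hL]
  decide

include hT hL in
lemma hgt_pos (m : ℕ) (hm : 1 ≤ m) : 1 ≤ hgt α m := by
  by_contra hc
  have hz : (eraseWord (wordPrefix α m)).count true = 0 := by unfold hgt at hc; omega
  obtain ⟨m', hm', hlen, hval⟩ := erasure_true_event hL 0 m
  have hlenm : 0 < (eraseWord (wordPrefix α m)).length := by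
    have h1 := eraseWord_length (wordPrefix α m)
    have h2 := len_counts (wordPrefix α m)
    have h3 := hgt_rel hT m
    unfold hgt at h3
    rw [wp_length] at h1 h2
    omega
  have hmono := foldl_getD_mono ((wordPrefix α m').drop m)
    (eraseWord (wordPrefix α m)) 0
  rw [← eraseWord_split α hm'] at hmono
  have : (eraseWord (wordPrefix α m)).getD 0 false = true := by
    apply hmono hlenm
    rw [hval]
    simp [oneZeros]
  rw [count_true_zero_getD _ hz] at this
  simp at this

lemma count_mono_wp (α : ℕ → Fin 3) (a : Fin 3) {k m : ℕ} (h : k ≤ m) :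
    (wordPrefix α k).count a ≤ (wordPrefix α m).count a :=
  (wp_prefix α h).sublist.count_le a

include hT hL in
lemma hgt_returns (p : ℕ) (hp : 1 ≤ p) : ∃ m, p < m ∧ hgt α m = 1 := by
  by_contra hc
  push_neg at hc
  set N := p + 1 with hN
  have h2 : ∀ m, N ≤ m → 2 ≤ hgt α m := by
    intro m hm
    have := hc m (by omega)
    have := hgt_pos hT hL m (by omega)
    omega
  obtain ⟨j, hjlen, hjval, hjcnt⟩ :=
    exists_pos_of_count (eraseWord (wordPrefix α N)) 2 (by omega) (h2 N (le_refl _))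
  have hj1 : 1 ≤ j := by
    have := List.count_le_length (a := true) (l := (eraseWord (wordPrefix α N)).take (j+1))
    rw [List.length_take] at this
    omega
  obtain ⟨m, hm, hlen, hval⟩ := erasure_true_event hL j N
  have hstab : (eraseWord (wordPrefix α m)).getD j false = true := by
    rw [eraseWord_split α hm]
    apply foldl_stab _ _ _ hjlen hjval
    intro l
    rw [hjcnt]
    have hsplit := wp_split_take α hm l
    set k := min (N + l) m with hk
    have hkN : N ≤ k := by omega
    have e1 := congrArg (List.count 1) hsplit
    have e2 := congrArg (List.count 2) hsplit
    rw [List.count_append] at e1 e2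
    have r1 := hgt_rel hT k
    have r2 := hgt_rel hT N
    have hk2 := h2 k hkN
    have hno : hgt α N = (eraseWord (wordPrefix α N)).count true := rfl
    unfold hgt at r1 r2 hk2 hno
    omega
  rw [hval] at hstab
  simp [oneZeros] at hstab
  omega

include hT hL in
lemma bnd_facts : ∀ n, (1 ≤ bnd α n ∧ hgt α (bnd α n) = 1) := by
  intro n
  induction n with
  | zero => exact ⟨le_refl _, hgt_one hT hL⟩
  | succ n ih =>
    show 1 ≤ nextB α (bnd α n) ∧ hgt α (nextB α (bnd α n)) = 1
    unfold nextB
    have hex : ∃ m, bnd α n < m ∧ hgt α m = 1 := hgt_returns hT hL _ ih.1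
    rw [dif_pos hex]
    have := Nat.find_spec hex
    exact ⟨by omega, this.2⟩

include hT hL in
lemma bnd_lt (n : ℕ) : bnd α n < bnd α (n+1) := by
  show bnd α n < nextB α (bnd α n)
  unfold nextB
  have hex : ∃ m, bnd α n < m ∧ hgt α m = 1 :=
    hgt_returns hT hL _ (bnd_facts hT hL n).1
  rw [dif_pos hex]
  exact (Nat.find_spec hex).1

include hT hL in
lemma bnd_min {n k : ℕ} (h1 : bnd α n < k) (h2 : k < bnd α (n+1)) : hgt α k ≠ 1 := by
  have hex : ∃ m, bnd α n < m ∧ hgt α m = 1 :=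
    hgt_returns hT hL _ (bnd_facts hT hL n).1
  have heq : bnd α (n+1) = Nat.find hex := by
    show nextB α (bnd α n) = _
    unfold nextB
    rw [dif_pos hex]
  intro hk
  exact (Nat.find_min hex (by omega)) ⟨h1, hk⟩

include hT hL in
lemma blockOf_isBlock (n : ℕ) : IsBlock (blockOf α n) := by
  have hlt := bnd_lt hT hL n
  have hb1 := (bnd_facts hT hL n).2
  have hb2 := (bnd_facts hT hL (n+1)).2
  have hsplit : wordPrefix α (bnd α (n+1)) = wordPrefix α (bnd α n) ++ blockOf α n := by
    unfold blockOf
    conv_lhs => rw [← List.take_append_drop (bnd α n) (wordPrefix α (n+1 |> bnd α))]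
    rw [wp_take, min_eq_left (le_of_lt hlt)]
  refine ⟨?_, ?_, ?_⟩
  · intro he
    have := congrArg List.length hsplit
    rw [he] at this
    simp [wp_length] at this
    omega
  · have e1 := congrArg (List.count 1) hsplit
    have e2 := congrArg (List.count 2) hsplit
    rw [List.count_append] at e1 e2
    have r1 := hgt_rel hT (bnd α n)
    have r2 := hgt_rel hT (bnd α (n+1))
    omega
  · intro l hl0 hll
    have hblen : (blockOf α n).length = bnd α (n+1) - bnd α n := by
      unfold blockOf
      rw [List.length_drop, wp_length]
    rw [hblen] at hll
    have htake : (blockOf α n).take l = ((wordPrefix α (bnd α (n+1))).drop (bnd α n)).take l := rfl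
    have hsp := wp_split_take α (le_of_lt hlt) l
    rw [min_eq_left (by omega)] at hsp
    have hk := bnd_min hT hL (n := n) (k := bnd α n + l) (by omega) (by omega)
    have hkpos := hgt_pos hT hL (bnd α n + l) (by omega)
    have e1 := congrArg (List.count 1) hsp
    have e2 := congrArg (List.count 2) hsp
    rw [List.count_append] at e1 e2
    have r1 := hgt_rel hT (bnd α n)
    have r2 := hgt_rel hT (bnd α n + l)
    rw [htake]
    omega

include hT hL in
lemma pc_gammaOf (n : ℕ) : pc (gammaOf α) n = wordPrefix α (bnd α n) := by
  induction n with
  | zero =>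
    show [1] = wordPrefix α 1
    rw [wp_one, alpha0 hT hL]
  | succ n ih =>
    show pc (gammaOf α) n ++ (gammaOf α n).val = _
    rw [ih]
    have hval : (gammaOf α n).val = blockOf α n := by
      unfold gammaOf
      rw [dif_pos (blockOf_isBlock hT hL n)]
    rw [hval]
    unfold blockOf
    conv_rhs => rw [← List.take_append_drop (bnd α n) (wordPrefix α (bnd α (n+1)))]
    rw [wp_take, min_eq_left (le_of_lt (bnd_lt hT hL n))]

include hT hL in
lemma bnd_ge (n : ℕ) : n + 1 ≤ bnd α n := by
  induction n with
  | zero => exact le_refl _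
  | succ n ih => have := bnd_lt hT hL n; omega

include hT hL in
lemma F_gammaOf : Ffun (gammaOf α) = α := by
  funext m
  show (pc (gammaOf α) (m+1)).getD m 0 = α m
  rw [pc_gammaOf hT hL]
  have h1 : m < bnd α (m+1) := by have := bnd_ge hT hL (m+1); omega
  rw [wp_getD _ _ _ h1]

end Decomp

lemma block_prefix_eq {s t : List (Fin 3)} (hs : IsBlock s) (ht : IsBlock t)
    (h : s <+: t) : s = t := by
  by_contra hne
  have hlen : s.length < t.length := by
    rcases Nat.lt_or_ge s.length t.length with h1 | h1
    · exact h1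
    · exact absurd (List.IsPrefix.eq_of_length h (le_antisymm h.length_le h1)) hne
  have hslen : 0 < s.length := List.length_pos_iff.2 hs.1
  have hc := ht.2.2 s.length hslen hlen
  rw [← List.prefix_iff_eq_take.1 h] at hc
  have := hs.2.1
  omega

lemma same_word_block_eq {γ γ' : ℕ → Blk} (h : Ffun γ = Ffun γ') {n : ℕ}
    (hpc : pc γ n = pc γ' n) : (γ n).val = (γ' n).val := by
  have key : ∀ (δ δ' : ℕ → Blk), Ffun δ = Ffun δ' → pc δ n = pc δ' n →
      (pc δ (n+1)).length ≤ (pc δ' (n+1)).length → (δ n).val <+: (δ' n).val := by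
    intro δ δ' hF hp hlen
    have h1 : wordPrefix (Ffun δ) (pc δ (n+1)).length = pc δ (n+1) := wp_F_full δ (n+1)
    have h2 : wordPrefix (Ffun δ) (pc δ' (n+1)).length = pc δ' (n+1) := by
      rw [hF]; exact wp_F_full δ' (n+1)
    have hpre : pc δ (n+1) <+: pc δ' (n+1) := by
      rw [← h1, ← h2]; exact wp_prefix _ hlen
    show (δ n).val <+: (δ' n).val
    have : pc δ n ++ (δ n).val <+: pc δ n ++ (δ' n).val := by
      show pc δ (n+1) <+: pc δ n ++ (δ' n).val
      rw [hp]
      exact hpre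
    exact (List.prefix_append_right_inj _).1 this
  rcases le_total (pc γ (n+1)).length (pc γ' (n+1)).length with hle | hle
  · exact block_prefix_eq (γ n).2 (γ' n).2 (key γ γ' h hpc hle)
  · exact (block_prefix_eq (γ' n).2 (γ n).2 (key γ' γ h.symm hpc.symm hle)).symm

lemma F_injective : Function.Injective Ffun := by
  intro γ γ' h
  have key : ∀ n, pc γ n = pc γ' n := by
    intro n
    induction n with
    | zero => rfl
    | succ n ih =>
      show pc γ n ++ (γ n).val = pc γ' n ++ (γ' n).val
      rw [ih, same_word_block_eq h ih]
  funext n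
  exact Subtype.ext (same_word_block_eq h (key n))
noncomputable def Fequiv : (ℕ → Blk) ≃ preimTenZeros where
  toFun γ := ⟨Ffun γ, F_mem γ⟩
  invFun α := gammaOf α.val
  left_inv γ := F_injective (F_gammaOf (F_mem_Tinf γ) (F_isLimit γ))
  right_inv α := Subtype.ext (F_gammaOf α.2.1 (isLimit_of_eMap_eq α.2.2))

def blkN (n : ℕ) : List (Fin 3) := 1 :: (List.replicate n 0 ++ [2])

lemma isBlock_blkN (n : ℕ) : IsBlock (blkN n) := by
  refine ⟨by simp [blkN], ?_, ?_⟩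
  · simp +decide [blkN, List.count_cons, List.count_append, List.count_replicate]
  · intro l hl0 hll
    have hlen : (blkN n).length = n + 2 := by simp [blkN]
    rw [hlen] at hll
    obtain ⟨k, rfl⟩ : ∃ k, l = k + 1 := ⟨l - 1, by omega⟩
    have : (blkN n).take (k+1) = 1 :: List.replicate (min k n) 0 := by
      unfold blkN
      rw [List.take_succ_cons, List.take_append_of_le_length (by simp; omega),
        List.take_replicate]
    rw [this]
    simp +decide [List.count_cons, List.count_replicate]

lemma blk_infinite : Infinite Blk := by
  apply Infinite.of_injective (fun n => (⟨blkN n, isBlock_blkN n⟩ : Blk))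
  intro a b h
  have := congrArg (fun s : Blk => s.val.length) h
  simp [blkN] at this
  omega

instance : Infinite Blk := blk_infinite

lemma pc_congr (γ γ' : ℕ → Blk) (n : ℕ) (h : ∀ i < n, γ i = γ' i) :
    pc γ n = pc γ' n := by
  induction n with
  | zero => rfl
  | succ n ih =>
    show pc γ n ++ (γ n).val = pc γ' n ++ (γ' n).val
    rw [ih (fun i hi => h i (by omega)), h n (by omega)]

lemma local_block_key (γ γ' : ℕ → Blk) (L k : ℕ)
    (hw : ∀ l ≤ L, wordPrefix (Ffun γ) l = wordPrefix (Ffun γ') l)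
    (hpc : pc γ k = pc γ' k)
    (hlen : (pc γ (k+1)).length ≤ (pc γ' (k+1)).length)
    (hL : (pc γ (k+1)).length ≤ L) :
    (γ k).val = (γ' k).val := by
  have h1 : pc γ (k+1) = wordPrefix (Ffun γ') (pc γ (k+1)).length := by
    rw [← hw _ hL]
    exact (wp_F_full γ (k+1)).symm
  have h2 : wordPrefix (Ffun γ') (pc γ (k+1)).length = (pc γ' (k+1)).take (pc γ (k+1)).length := by
    rw [← wp_F_full γ' (k+1), wp_take, min_eq_left hlen]
  have hpre : pc γ (k+1) <+: pc γ' (k+1) := by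
    rw [h1, h2]
    exact List.take_prefix _ _
  have : pc γ k ++ (γ k).val <+: pc γ k ++ (γ' k).val := by
    show pc γ (k+1) <+: pc γ k ++ (γ' k).val
    rw [hpc]
    exact hpre
  exact block_prefix_eq (γ k).2 (γ' k).2 ((List.prefix_append_right_inj _).1 this)

lemma local_block_step (γ γ' : ℕ → Blk) (L k : ℕ)
    (hw : ∀ l ≤ L, wordPrefix (Ffun γ) l = wordPrefix (Ffun γ') l)
    (hpc : pc γ k = pc γ' k)
    (hLk : (pc γ (k+1)).length ≤ L) :
    (γ k).val = (γ' k).val := by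
  rcases le_total (pc γ (k+1)).length (pc γ' (k+1)).length with h | h
  · exact local_block_key γ γ' L k hw hpc h hLk
  · exact (local_block_key γ' γ L k (fun l hl => (hw l hl).symm) hpc.symm h
      (le_trans h hLk)).symm

lemma local_blocks (γ γ' : ℕ → Blk) (n L : ℕ)
    (hw : ∀ l ≤ L, wordPrefix (Ffun γ) l = wordPrefix (Ffun γ') l)
    (hL : (pc γ (n+1)).length ≤ L) :
    ∀ k ≤ n, (γ k).val = (γ' k).val ∧ pc γ (k+1) = pc γ' (k+1) := by
  intro k
  induction k with
  | zero =>
    intro hk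
    have hlen : (pc γ 1).length ≤ L :=
      le_trans (pc_prefix γ (by omega : 1 ≤ n+1)).length_le hL
    have hval := local_block_step γ γ' L 0 hw rfl hlen
    exact ⟨hval, by show pc γ 0 ++ _ = pc γ' 0 ++ _; rw [hval]; rfl⟩
  | succ k ih =>
    intro hk
    have hpc := (ih (by omega)).2
    have hlen : (pc γ (k+2)).length ≤ L :=
      le_trans (pc_prefix γ (by omega : k+2 ≤ n+1)).length_le hL
    have hval := local_block_step γ γ' L (k+1) hw hpc hlen
    refine ⟨hval, ?_⟩
    show pc γ (k+1) ++ _ = pc γ' (k+1) ++ _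
    rw [hpc, hval]

lemma gammaOf_local {α β : ℕ → Fin 3} (hα : α ∈ preimTenZeros) (hβ : β ∈ preimTenZeros)
    (n : ℕ) (hag : ∀ i < (pc (gammaOf α) (n+1)).length, β i = α i) :
    gammaOf β n = gammaOf α n := by
  have hFα : Ffun (gammaOf α) = α := F_gammaOf hα.1 (isLimit_of_eMap_eq hα.2)
  have hFβ : Ffun (gammaOf β) = β := F_gammaOf hβ.1 (isLimit_of_eMap_eq hβ.2)
  set L := (pc (gammaOf α) (n+1)).length with hLdef
  have hw : ∀ l ≤ L, wordPrefix (Ffun (gammaOf α)) l = wordPrefix (Ffun (gammaOf β)) l := by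
    intro l hl
    rw [hFα, hFβ]
    apply List.ext_getElem (by simp [wp_length])
    intro i h1 h2
    rw [wp_getElem, wp_getElem]
    rw [wp_length] at h1
    exact (hag i (by omega)).symm
  have := (local_blocks (gammaOf α) (gammaOf β) n L hw (le_refl _) n (le_refl _)).1
  exact (Subtype.ext this).symm

lemma eventually_agree {X : Type*} [TopologicalSpace X] [DiscreteTopology X]
    (x : ℕ → X) (k : ℕ) : ∀ᶠ y in nhds x, ∀ i < k, y i = x i := by
  have hopen : IsOpen {y : ℕ → X | ∀ i < k, y i = x i} := by
    have : {y : ℕ → X | ∀ i < k, y i = x i}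
        = ⋂ i ∈ Finset.range k, (fun y : ℕ → X => y i) ⁻¹' {x i} := by
      ext y
      simp [Finset.mem_range, Set.mem_iInter]
    rw [this]
    apply isOpen_biInter_finset
    intro i _
    exact (continuous_apply i).isOpen_preimage _ (isOpen_discrete _)
  exact Filter.eventually_of_mem (hopen.mem_nhds (fun i _ => rfl)) (fun y hy => hy)

noncomputable def bigEquiv (eB : ℕ ≃ Blk) : (ℕ → ℕ) ≃ preimTenZeros :=
  (Equiv.piCongrRight (fun _ => eB)).trans Fequiv

lemma bigEquiv_continuous (eB : ℕ ≃ Blk) :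
    Continuous (bigEquiv eB) := by
  apply Continuous.subtype_mk (f := fun x : ℕ → ℕ => Ffun (fun n => eB (x n)))
  apply continuous_pi
  intro m
  apply IsLocallyConstant.continuous
    (f := fun x : ℕ → ℕ => Ffun (fun n => eB (x n)) m)
  rw [IsLocallyConstant.iff_eventually_eq]
  intro x
  filter_upwards [eventually_agree x (m+1)] with y hy
  show (pc (fun n => eB (y n)) (m+1)).getD m 0 = (pc (fun n => eB (x n)) (m+1)).getD m 0
  rw [pc_congr (fun n => eB (y n)) (fun n => eB (x n)) (m+1)
    (fun i hi => by show eB (y i) = eB (x i); rw [hy i hi])]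

lemma bigEquiv_symm_continuous (eB : ℕ ≃ Blk) :
    Continuous (bigEquiv eB).symm := by
  have hsymm : ∀ α : preimTenZeros, (bigEquiv eB).symm α = fun n => eB.symm (gammaOf α.val n) := by
    intro α
    rfl
  apply continuous_pi
  intro n
  apply IsLocallyConstant.continuous (f := fun α : preimTenZeros => (bigEquiv eB).symm α n)
  rw [IsLocallyConstant.iff_eventually_eq]
  intro α
  have hev : ∀ᶠ β : preimTenZeros in nhds α,
      ∀ i < (pc (gammaOf α.val) (n+1)).length, β.val i = α.val i :=
    (continuous_subtype_val.tendsto α).eventually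
      (eventually_agree α.val (pc (gammaOf α.val) (n+1)).length)
  filter_upwards [hev] with β hβ
  rw [hsymm, hsymm]
  show eB.symm (gammaOf β.val n) = eB.symm (gammaOf α.val n)
  rw [gammaOf_local α.2 β.2 n hβ]

/-- `e^{-1}({10^ω})` is homeomorphic to the Baire space `ℕ^ℕ`; consequently it is not a
countable union of compact subsets of `3^ω`. -/
theorem preimTenZeros_homeomorph_baire :
    Nonempty ((ℕ → ℕ) ≃ₜ preimTenZeros) ∧
      ¬ ∃ K : ℕ → Set (ℕ → Fin 3), (∀ n, IsCompact (K n)) ∧ preimTenZeros = ⋃ n, K n := by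
  have : Countable Blk := Subtype.countable
  obtain ⟨db⟩ := nonempty_denumerable Blk
  let eB : ℕ ≃ Blk := (@Denumerable.eqv Blk db).symm
  let homeo : (ℕ → ℕ) ≃ₜ preimTenZeros :=
    ⟨bigEquiv eB, bigEquiv_continuous eB, bigEquiv_symm_continuous eB⟩
  refine ⟨⟨homeo⟩, ?_⟩
  rintro ⟨K, hK, hU⟩
  have hsub : ∀ n, K n ⊆ preimTenZeros := by
    intro n
    rw [hU]
    exact Set.subset_iUnion K n
  set K' : ℕ → Set (ℕ → ℕ) := fun n => homeo ⁻¹' (Subtype.val ⁻¹' K n) with hK'def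
  have hK' : ∀ n, IsCompact (K' n) := by
    intro n
    apply homeo.isCompact_preimage.2
    have : IsCompact (Subtype.val '' (Subtype.val ⁻¹' K n : Set preimTenZeros)) := by
      rw [Set.image_preimage_eq_of_subset (by rw [Subtype.range_coe]; exact hsub n)]
      exact hK n
    exact Topology.IsEmbedding.subtypeVal.isCompact_iff.2 this
  have hcover : ∀ x : ℕ → ℕ, ∃ n, x ∈ K' n := by
    intro x
    have : (homeo x).val ∈ ⋃ n, K n := by rw [← hU]; exact (homeo x).2
    obtain ⟨n, hn⟩ := Set.mem_iUnion.1 this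
    exact ⟨n, hn⟩
  have hbdd : ∀ n, BddAbove ((fun g : ℕ → ℕ => g n) '' K' n) := by
    intro n
    exact ((hK' n).image (continuous_apply n)).bddAbove
  choose b hb using hbdd
  obtain ⟨n, hn⟩ := hcover (fun n => b n + 1)
  have : b n + 1 ≤ b n := hb n ⟨fun n => b n + 1, hn, rfl⟩
  omega
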